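/- Let f be a holomorphic self-map of the unit disk D without fixed points, and suppose some left straightening h of {f^n} is a constant map. Then lim_{n→∞} ω(f^n(z), f^n(w)) = 0 for all z, w ∈ D; in particular the hyperbolic step s^f is identically zero. -/

import Mathlib

open Complex Metric Filter Set

/-- Inverse hyperbolic tangent. -/
noncomputable def artanh (t : ℝ) : ℝ := (1/2) * Real.log ((1 + t) / (1 - t))

/-- Poincaré distance on the unit disk. -/
noncomputable def pd (z w : ℂ) : ℝ :=
  artanh (‖(w - z) / (1 - (starRingEnd ℂ) z * w)‖)

/-- Holomorphic self-map of the unit disk. -/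
def HolSelfDisk (f : ℂ → ℂ) : Prop :=
  DifferentiableOn ℂ f (ball (0:ℂ) 1) ∧ MapsTo f (ball (0:ℂ) 1) (ball (0:ℂ) 1)

/-- A pair of maps that are mutually inverse holomorphic self-maps of the disk,
i.e. an automorphism of the disk together with its inverse. -/
def IsDiskAutPair (γ γinv : ℂ → ℂ) : Prop :=
  HolSelfDisk γ ∧ HolSelfDisk γinv ∧
  (∀ z ∈ ball (0:ℂ) 1, γinv (γ z) = z) ∧ (∀ z ∈ ball (0:ℂ) 1, γ (γinv z) = z)

/-- Möbius factor. -/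
noncomputable def mob (a w : ℂ) : ℂ := (w - a) / (1 - (starRingEnd ℂ) a * w)

lemma pd_eq (z w : ℂ) : pd z w = artanh (‖mob z w‖) := rfl

lemma mob_denom_ne {a w : ℂ} (ha : ‖a‖ < 1) (hw : ‖w‖ < 1) :
    (1 : ℂ) - (starRingEnd ℂ) a * w ≠ 0 := by
  intro h
  have h1 : (1 : ℂ) = (starRingEnd ℂ) a * w := by linear_combination h
  have : (1 : ℝ) = ‖(starRingEnd ℂ) a * w‖ := by
    rw [← h1]; simp
  rw [norm_mul, Complex.norm_conj] at this
  nlinarith [norm_nonneg a, norm_nonneg w]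

lemma normSq_identity (a w : ℂ) :
    Complex.normSq (1 - (starRingEnd ℂ) a * w) - Complex.normSq (w - a)
      = (1 - Complex.normSq a) * (1 - Complex.normSq w) := by
  simp only [Complex.normSq_apply, Complex.sub_re, Complex.sub_im, Complex.mul_re,
    Complex.mul_im, Complex.one_re, Complex.one_im, Complex.conj_re, Complex.conj_im]
  ring

lemma mob_abs_lt {a w : ℂ} (ha : ‖a‖ < 1) (hw : ‖w‖ < 1) :
    ‖mob a w‖ < 1 := by
  have hd := mob_denom_ne ha hw
  have hd' : 0 < ‖1 - (starRingEnd ℂ) a * w‖ := norm_pos_iff.mpr hd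
  rw [mob, norm_div, div_lt_one hd']
  have h1 : Complex.normSq (w - a) < Complex.normSq (1 - (starRingEnd ℂ) a * w) := by
    have hna : Complex.normSq a < 1 := by
      rw [← Complex.sq_norm]; nlinarith [norm_nonneg a]
    have hnw : Complex.normSq w < 1 := by
      rw [← Complex.sq_norm]; nlinarith [norm_nonneg w]
    nlinarith [normSq_identity a w]
  rw [Complex.norm_def, Complex.norm_def]
  exact Real.sqrt_lt_sqrt (Complex.normSq_nonneg _) h1

lemma mob_mapsTo {a : ℂ} (ha : a ∈ ball (0:ℂ) 1) :
    MapsTo (mob a) (ball (0:ℂ) 1) (ball (0:ℂ) 1) := by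
  intro w hw
  rw [mem_ball_zero_iff] at *
  exact mob_abs_lt ha hw

lemma mob_diffOn {a : ℂ} (ha : a ∈ ball (0:ℂ) 1) :
    DifferentiableOn ℂ (mob a) (ball (0:ℂ) 1) := by
  rw [mem_ball_zero_iff] at ha
  apply DifferentiableOn.div
  · exact (differentiable_id.sub_const a).differentiableOn
  · exact ((differentiable_const _).sub ((differentiable_const _).mul differentiable_id)).differentiableOn
  · intro w hw
    exact mob_denom_ne ha (mem_ball_zero_iff.mp hw)

lemma mob_hol {a : ℂ} (ha : a ∈ ball (0:ℂ) 1) : HolSelfDisk (mob a) :=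
  ⟨mob_diffOn ha, mob_mapsTo ha⟩

lemma mob_neg_mob {a w : ℂ} (ha : ‖a‖ < 1) (hw : ‖w‖ < 1) :
    mob (-a) (mob a w) = w := by
  have h1 : (1 : ℂ) - (starRingEnd ℂ) a * w ≠ 0 := mob_denom_ne ha hw
  have h2 : (1 : ℂ) - (starRingEnd ℂ) (-a) * (mob a w) ≠ 0 := by
    apply mob_denom_ne (by simpa using ha)
    exact mob_abs_lt ha hw
  have h3 : (1 : ℂ) - (starRingEnd ℂ) a * a ≠ 0 := mob_denom_ne ha ha
  simp only [mob] at h2 ⊢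
  rw [div_eq_iff h2]
  simp only [map_neg]
  have h1x : (1:ℂ) - w * (starRingEnd ℂ) a ≠ 0 := by rwa [mul_comm w]
  field_simp
  ring

lemma mob_self (a : ℂ) : mob a a = 0 := by simp [mob]

lemma artanh_nonneg {t : ℝ} (h0 : 0 ≤ t) (h1 : t < 1) : 0 ≤ artanh t := by
  have : (1 : ℝ) ≤ (1 + t) / (1 - t) := by
    rw [le_div_iff₀ (by linarith)]; linarith
  have := Real.log_nonneg this
  rw [artanh]; linarith

lemma artanh_mono {s t : ℝ} (hs : 0 ≤ s) (hst : s ≤ t) (ht : t < 1) :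
    artanh s ≤ artanh t := by
  have h1 : (1 + s) / (1 - s) ≤ (1 + t) / (1 - t) := by
    rw [div_le_div_iff₀ (by linarith) (by linarith)]
    nlinarith
  have h2 : (0 : ℝ) < (1 + s) / (1 - s) := div_pos (by linarith) (by linarith)
  have := Real.log_le_log h2 h1
  rw [artanh, artanh]; linarith

/-- Schwarz–Pick lemma, pseudo-hyperbolic form. -/
lemma schwarz_pick {g : ℂ → ℂ} (hg : HolSelfDisk g) {a b : ℂ}
    (ha : a ∈ ball (0:ℂ) 1) (hb : b ∈ ball (0:ℂ) 1) :
    ‖mob (g a) (g b)‖ ≤ ‖mob a b‖ := by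
  have ha' := mem_ball_zero_iff.mp ha
  have hb' := mem_ball_zero_iff.mp hb
  have hna : (-a) ∈ ball (0:ℂ) 1 := by rw [mem_ball_zero_iff]; simpa using ha'
  have hga : g a ∈ ball (0:ℂ) 1 := hg.2 ha
  set φ : ℂ → ℂ := fun u => mob (g a) (g (mob (-a) u)) with hφ
  have hφd : DifferentiableOn ℂ φ (ball (0:ℂ) 1) := by
    apply DifferentiableOn.comp (mob_diffOn hga)
      (DifferentiableOn.comp hg.1 (mob_diffOn hna) (mob_mapsTo hna))
    exact (hg.2.comp (mob_mapsTo hna))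
  have hφm : MapsTo φ (ball (0:ℂ) 1) (ball (0:ℂ) 1) :=
    (mob_mapsTo hga).comp (hg.2.comp (mob_mapsTo hna))
  have hφ0 : φ 0 = 0 := by
    have : mob (-a) 0 = a := by simp [mob]
    rw [hφ]; simp only [this, mob_self]
  have key := Complex.norm_le_norm_of_mapsTo_ball hφd (hφm.mono_right ball_subset_closedBall) hφ0
    (z := mob a b) (mob_abs_lt ha' hb')
  have : φ (mob a b) = mob (g a) (g b) := by
    rw [hφ]; simp only [mob_neg_mob ha' hb']
  rwa [this] at key

lemma pd_schwarz_pick {g : ℂ → ℂ} (hg : HolSelfDisk g) {a b : ℂ}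
    (ha : a ∈ ball (0:ℂ) 1) (hb : b ∈ ball (0:ℂ) 1) :
    pd (g a) (g b) ≤ pd a b := by
  rw [pd_eq, pd_eq]
  exact artanh_mono (norm_nonneg _) (schwarz_pick hg ha hb)
    (mob_abs_lt (mem_ball_zero_iff.mp ha) (mem_ball_zero_iff.mp hb))

lemma pd_nonneg {a b : ℂ} (ha : a ∈ ball (0:ℂ) 1) (hb : b ∈ ball (0:ℂ) 1) :
    0 ≤ pd a b := by
  rw [pd_eq]
  exact artanh_nonneg (norm_nonneg _)
    (mob_abs_lt (mem_ball_zero_iff.mp ha) (mem_ball_zero_iff.mp hb))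

lemma artanh_continuousAt_zero : ContinuousAt artanh 0 := by
  have : ContinuousAt (fun t : ℝ => (1/2) * Real.log ((1 + t) / (1 - t))) 0 := by
    apply ContinuousAt.mul continuousAt_const
    apply ContinuousAt.comp (x := (0:ℝ)) (g := Real.log)
    · apply Real.continuousAt_log; norm_num
    · exact ContinuousAt.div (by fun_prop) (by fun_prop) (by norm_num)
  exact this

lemma pd_tendsto_zero {a b : ℕ → ℂ} {c : ℂ} (hc : c ∈ ball (0:ℂ) 1)
    (hA : Tendsto a atTop (nhds c)) (hB : Tendsto b atTop (nhds c)) :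
    Tendsto (fun n => pd (a n) (b n)) atTop (nhds 0) := by
  have hc' := mem_ball_zero_iff.mp hc
  have hden : Tendsto (fun n => (1 : ℂ) - (starRingEnd ℂ) (a n) * (b n)) atTop
      (nhds (1 - (starRingEnd ℂ) c * c)) := by
    exact tendsto_const_nhds.sub (((Complex.continuous_conj.tendsto c).comp hA).mul hB)
  have hdne : (1 : ℂ) - (starRingEnd ℂ) c * c ≠ 0 := mob_denom_ne hc' hc'
  have hmob : Tendsto (fun n => mob (a n) (b n)) atTop (nhds 0) := by
    have : Tendsto (fun n => (b n - a n) / (1 - (starRingEnd ℂ) (a n) * (b n))) atTop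
        (nhds ((c - c) / (1 - (starRingEnd ℂ) c * c))) := (hB.sub hA).div hden hdne
    simpa [mob] using this
  have habs : Tendsto (fun n => ‖mob (a n) (b n)‖) atTop (nhds 0) := by
    have := (continuous_norm.tendsto 0).comp hmob
    simpa [Function.comp_def] using this
  have := artanh_continuousAt_zero.tendsto.comp habs
  have h0 : artanh 0 = 0 := by simp [artanh]
  rw [h0] at this
  simpa [pd_eq, Function.comp_def] using this

theorem stmt7 (f : ℂ → ℂ) (hf : HolSelfDisk f)
    (hfix : ∀ z ∈ ball (0:ℂ) 1, f z ≠ z)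
    (γ γinv : ℕ → ℂ → ℂ) (h : ℂ → ℂ)
    (hγ : ∀ n, IsDiskAutPair (γ n) (γinv n)) (hh : HolSelfDisk h)
    (hconv : TendstoLocallyUniformlyOn (fun n z => γinv n (f^[n] z)) h atTop (ball (0:ℂ) 1))
    (hconst : ∃ c : ℂ, ∀ z ∈ ball (0:ℂ) 1, h z = c) :
    (∀ z ∈ ball (0:ℂ) 1, ∀ w ∈ ball (0:ℂ) 1,
      Tendsto (fun n => pd (f^[n] z) (f^[n] w)) atTop (nhds 0)) ∧
    (∀ z ∈ ball (0:ℂ) 1,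
      Tendsto (fun n => pd (f^[n] z) (f^[n+1] z)) atTop (nhds 0)) := by
  obtain ⟨c, hc⟩ := hconst
  have h0 : (0:ℂ) ∈ ball (0:ℂ) 1 := by simp
  have hcball : c ∈ ball (0:ℂ) 1 := by
    have := hh.2 h0
    rwa [hc 0 h0] at this
  have main : ∀ z ∈ ball (0:ℂ) 1, ∀ w ∈ ball (0:ℂ) 1,
      Tendsto (fun n => pd (f^[n] z) (f^[n] w)) atTop (nhds 0) := by
    intro z hz w hw
    have hiter : ∀ n, f^[n] z ∈ ball (0:ℂ) 1 := fun n => hf.2.iterate n hz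
    have hiterw : ∀ n, f^[n] w ∈ ball (0:ℂ) 1 := fun n => hf.2.iterate n hw
    set A : ℕ → ℂ := fun n => γinv n (f^[n] z) with hA
    set B : ℕ → ℂ := fun n => γinv n (f^[n] w) with hB
    have hAball : ∀ n, A n ∈ ball (0:ℂ) 1 := fun n => (hγ n).2.1.2 (hiter n)
    have hBball : ∀ n, B n ∈ ball (0:ℂ) 1 := fun n => (hγ n).2.1.2 (hiterw n)
    have hAt : Tendsto A atTop (nhds c) := by
      have := hconv.tendsto_at hz
      rwa [hc z hz] at this
    have hBt : Tendsto B atTop (nhds c) := by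
      have := hconv.tendsto_at hw
      rwa [hc w hw] at this
    have hABpd : Tendsto (fun n => pd (A n) (B n)) atTop (nhds 0) :=
      pd_tendsto_zero hcball hAt hBt
    apply squeeze_zero (fun n => pd_nonneg (hiter n) (hiterw n)) _ hABpd
    intro n
    have hgA : γ n (A n) = f^[n] z := (hγ n).2.2.2 _ (hiter n)
    have hgB : γ n (B n) = f^[n] w := (hγ n).2.2.2 _ (hiterw n)
    calc pd (f^[n] z) (f^[n] w) = pd (γ n (A n)) (γ n (B n)) := by rw [hgA, hgB]
      _ ≤ pd (A n) (B n) := pd_schwarz_pick (hγ n).1 (hAball n) (hBball n)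
  refine ⟨main, fun z hz => ?_⟩
  have hfz : f z ∈ ball (0:ℂ) 1 := hf.2 hz
  have := main z hz (f z) hfz
  simpa [Function.iterate_succ_apply] using this
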